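/- Let K be a field. The K-algebra K[a,b]/(ab, a³ + b³ − 1) is isomorphic as a K-algebra to the direct product (K[t]/(t³ − 1)) × (K[t]/(t³ − 1)), i.e. to the direct product of two copies of the group algebra over K of the cyclic group of order 3. Moreover, the classes of a, a², a³, b, b², b³ form a K-basis of K[a,b]/(ab, a³ + b³ − 1), so this algebra is 6-dimensional, and the classes of a³ and b³ are orthogonal idempotents whose sum is 1. -/

import Mathlib

open Polynomial

set_option maxHeartbeats 8000000
set_option synthInstance.maxHeartbeats 100000



/-- The `K`-algebra `H = K[a,b]/(ab, a³ + b³ − 1)` is isomorphic as a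
`K`-algebra to `(K[t]/(t³ − 1)) × (K[t]/(t³ − 1))`, the direct product of two copies of
the group algebra of the cyclic group of order 3.  Moreover the classes of
`a, a², a³, b, b², b³` form a `K`-basis of `H` (so `H` is 6-dimensional), and the
classes of `a³` and `b³` are orthogonal idempotents whose sum is `1`. -/
theorem stmt12 (K : Type*) [Field K]
    (H : Ideal (MvPolynomial (Fin 2) K))
    (hH : H = Ideal.span {MvPolynomial.X 0 * MvPolynomial.X 1,
      MvPolynomial.X 0 ^ 3 + MvPolynomial.X 1 ^ 3 - 1}) :
    Nonempty ((MvPolynomial (Fin 2) K ⧸ H) ≃ₐ[K]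
      ((Polynomial K ⧸ Ideal.span {(Polynomial.X : Polynomial K) ^ 3 - 1}) ×
        (Polynomial K ⧸ Ideal.span {(Polynomial.X : Polynomial K) ^ 3 - 1}))) ∧
    LinearIndependent K
      ![Ideal.Quotient.mk H (MvPolynomial.X 0),
        Ideal.Quotient.mk H (MvPolynomial.X 0 ^ 2),
        Ideal.Quotient.mk H (MvPolynomial.X 0 ^ 3),
        Ideal.Quotient.mk H (MvPolynomial.X 1),
        Ideal.Quotient.mk H (MvPolynomial.X 1 ^ 2),
        Ideal.Quotient.mk H (MvPolynomial.X 1 ^ 3)] ∧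
    Submodule.span K
      ({Ideal.Quotient.mk H (MvPolynomial.X 0),
        Ideal.Quotient.mk H (MvPolynomial.X 0 ^ 2),
        Ideal.Quotient.mk H (MvPolynomial.X 0 ^ 3),
        Ideal.Quotient.mk H (MvPolynomial.X 1),
        Ideal.Quotient.mk H (MvPolynomial.X 1 ^ 2),
        Ideal.Quotient.mk H (MvPolynomial.X 1 ^ 3)} :
        Set (MvPolynomial (Fin 2) K ⧸ H)) = ⊤ ∧
    Module.finrank K (MvPolynomial (Fin 2) K ⧸ H) = 6 ∧
    Ideal.Quotient.mk H (MvPolynomial.X 0 ^ 3) *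
      Ideal.Quotient.mk H (MvPolynomial.X 0 ^ 3) =
      Ideal.Quotient.mk H (MvPolynomial.X 0 ^ 3) ∧
    Ideal.Quotient.mk H (MvPolynomial.X 1 ^ 3) *
      Ideal.Quotient.mk H (MvPolynomial.X 1 ^ 3) =
      Ideal.Quotient.mk H (MvPolynomial.X 1 ^ 3) ∧
    Ideal.Quotient.mk H (MvPolynomial.X 0 ^ 3) *
      Ideal.Quotient.mk H (MvPolynomial.X 1 ^ 3) = 0 ∧
    Ideal.Quotient.mk H (MvPolynomial.X 0 ^ 3) +
      Ideal.Quotient.mk H (MvPolynomial.X 1 ^ 3) = 1 := by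
  classical
  -- names
  set g1 : MvPolynomial (Fin 2) K := MvPolynomial.X 0 * MvPolynomial.X 1 with hg1
  set g2 : MvPolynomial (Fin 2) K :=
    MvPolynomial.X 0 ^ 3 + MvPolynomial.X 1 ^ 3 - 1 with hg2
  -- basic quotient relations
  have key : ∀ p q : MvPolynomial (Fin 2) K,
      (∃ u v, u * g1 + v * g2 = p - q) →
      Ideal.Quotient.mk H p = Ideal.Quotient.mk H q := by
    intro p q ⟨u, v, huv⟩
    rw [Ideal.Quotient.mk_eq_mk_iff_sub_mem, hH]
    exact Ideal.mem_span_pair.2 ⟨u, v, huv⟩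
  -- relations among the generator images
  have mk_pow : ∀ (n : ℕ) (i : Fin 2), Ideal.Quotient.mk H (MvPolynomial.X i ^ n)
      = (Ideal.Quotient.mk H (MvPolynomial.X i)) ^ n := fun n i => map_pow _ _ _
  have hone : (1 : MvPolynomial (Fin 2) K ⧸ H)
      = Ideal.Quotient.mk H (MvPolynomial.X 0 ^ 3) +
        Ideal.Quotient.mk H (MvPolynomial.X 1 ^ 3) := by
    rw [← (Ideal.Quotient.mk H).map_add, ← (Ideal.Quotient.mk H).map_one]
    exact key _ _ ⟨0, -1, by ring⟩
  have hxy : Ideal.Quotient.mk H (MvPolynomial.X (0:Fin 2) * MvPolynomial.X 1) = 0 := by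
    rw [show (0 : MvPolynomial (Fin 2) K ⧸ H) = Ideal.Quotient.mk H 0 from (map_zero _).symm]
    exact key _ _ ⟨1, 0, by ring⟩
  have hx4 : (Ideal.Quotient.mk H (MvPolynomial.X 0)) ^ 4
      = Ideal.Quotient.mk H (MvPolynomial.X 0) := by
    rw [← mk_pow 4 0]
    exact key _ _ ⟨-(MvPolynomial.X 1)^2, MvPolynomial.X 0, by ring⟩
  have hy4 : (Ideal.Quotient.mk H (MvPolynomial.X 1)) ^ 4
      = Ideal.Quotient.mk H (MvPolynomial.X 1) := by
    rw [← mk_pow 4 1]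
    exact key _ _ ⟨-(MvPolynomial.X 0)^2, MvPolynomial.X 1, by ring⟩
  set Q := MvPolynomial (Fin 2) K ⧸ H with hQ
  set x : Q := Ideal.Quotient.mk H (MvPolynomial.X 0) with hx
  set y : Q := Ideal.Quotient.mk H (MvPolynomial.X 1) with hy
  have hxy' : x * y = 0 := by rw [hx, hy, ← (Ideal.Quotient.mk H).map_mul]; exact hxy
  have hyx' : y * x = 0 := by rw [mul_comm]; exact hxy'
  set s : Set Q := {x, x^2, x^3, y, y^2, y^3} with hs
  set S : Submodule K Q := Submodule.span K s with hS
  have memS : ∀ z ∈ s, z ∈ S := fun z hz => Submodule.subset_span hz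
  have m1 : x ∈ S := memS _ (by simp only [hs, Set.mem_insert_iff, Set.mem_singleton_iff]; tauto)
  have m2 : x^2 ∈ S := memS _ (by simp only [hs, Set.mem_insert_iff, Set.mem_singleton_iff]; tauto)
  have m3 : x^3 ∈ S := memS _ (by simp only [hs, Set.mem_insert_iff, Set.mem_singleton_iff]; tauto)
  have m4 : y ∈ S := memS _ (by simp only [hs, Set.mem_insert_iff, Set.mem_singleton_iff]; tauto)
  have m5 : y^2 ∈ S := memS _ (by simp only [hs, Set.mem_insert_iff, Set.mem_singleton_iff]; tauto)
  have m6 : y^3 ∈ S := memS _ (by simp only [hs, Set.mem_insert_iff, Set.mem_singleton_iff]; tauto)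
  have honeS : (1 : Q) ∈ S := by
    rw [hone, mk_pow, mk_pow, ← hx, ← hy]
    exact add_mem m3 m6
  have closx : ∀ z ∈ S, z * x ∈ S := by
    intro z hz
    induction hz using Submodule.span_induction with
    | mem w hw =>
      simp only [hs, Set.mem_insert_iff, Set.mem_singleton_iff] at hw
      rcases hw with rfl|rfl|rfl|rfl|rfl|rfl
      · rw [← sq]; exact m2
      · rw [← pow_succ]; exact m3
      · have h31 : x ^ 3 * x = x := by
          rw [← pow_succ]; norm_num [hx4]
        rw [h31]; exact m1
      · rw [hyx']; exact zero_mem S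
      · rw [sq, mul_assoc, hyx', mul_zero]; exact zero_mem S
      · rw [pow_succ, mul_assoc, hyx', mul_zero]; exact zero_mem S
    | zero => rw [zero_mul]; exact zero_mem S
    | add a b _ _ ha hb => rw [add_mul]; exact add_mem ha hb
    | smul a w _ hw => rw [smul_mul_assoc]; exact Submodule.smul_mem _ _ hw
  have closy : ∀ z ∈ S, z * y ∈ S := by
    intro z hz
    induction hz using Submodule.span_induction with
    | mem w hw =>
      simp only [hs, Set.mem_insert_iff, Set.mem_singleton_iff] at hw
      rcases hw with rfl|rfl|rfl|rfl|rfl|rfl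
      · rw [hxy']; exact zero_mem S
      · rw [sq, mul_assoc, hxy', mul_zero]; exact zero_mem S
      · rw [pow_succ, mul_assoc, hxy', mul_zero]; exact zero_mem S
      · rw [← sq]; exact m5
      · rw [← pow_succ]; exact m6
      · have h31 : y ^ 3 * y = y := by
          rw [← pow_succ]; norm_num [hy4]
        rw [h31]; exact m4
    | zero => rw [zero_mul]; exact zero_mem S
    | add a b _ _ ha hb => rw [add_mul]; exact add_mem ha hb
    | smul a w _ hw => rw [smul_mul_assoc]; exact Submodule.smul_mem _ _ hw
  have hspanTop : S = ⊤ := by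
    rw [eq_top_iff]
    rintro z -
    obtain ⟨p, rfl⟩ := Ideal.Quotient.mk_surjective z
    induction p using MvPolynomial.induction_on with
    | C a =>
      have h1 : Ideal.Quotient.mk H (MvPolynomial.C a) = a • (1 : Q) := by
        rw [← MvPolynomial.algebraMap_eq, Ideal.Quotient.mk_algebraMap,
          Algebra.algebraMap_eq_smul_one]
      rw [h1]
      exact Submodule.smul_mem _ _ honeS
    | add p q hp hq =>
      rw [(Ideal.Quotient.mk H).map_add]
      exact add_mem hp hq
    | mul_X p i hp =>
      rw [(Ideal.Quotient.mk H).map_mul]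
      fin_cases i
      · exact closx _ hp
      · exact closy _ hp
  -- the target algebra R = K[X]/(X^3-1)
  have hfne : ((X : Polynomial K) ^ 3 - 1) ≠ 0 := by
    intro h
    have h3 := congrArg (fun p => Polynomial.coeff p 3) h
    simp [Polynomial.coeff_one] at h3
  have hdeg : ((X : Polynomial K) ^ 3 - 1).natDegree = 3 := by
    rw [show ((X : Polynomial K) ^ 3 - 1) = X ^ 3 - Polynomial.C 1 by rw [map_one]]
    exact Polynomial.natDegree_X_pow_sub_C
  set R := AdjoinRoot ((X : Polynomial K) ^ 3 - 1) with hR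
  set r : R := AdjoinRoot.root ((X : Polynomial K) ^ 3 - 1) with hr
  have hr3 : r ^ 3 = 1 := by
    have h0 : AdjoinRoot.mk ((X : Polynomial K) ^ 3 - 1) ((X : Polynomial K) ^ 3 - 1) = 0 :=
      AdjoinRoot.mk_self
    rw [map_sub, map_pow, AdjoinRoot.mk_X, map_one, sub_eq_zero] at h0
    exact h0
  set φ : MvPolynomial (Fin 2) K →ₐ[K] R × R :=
    MvPolynomial.aeval ![((r, 0) : R × R), ((0, r) : R × R)] with hφ
  have hφ1 : φ (MvPolynomial.X 0) = (r, 0) := by simp [hφ]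
  have hφ2 : φ (MvPolynomial.X 1) = (0, r) := by simp [hφ]
  have hφg1 : φ g1 = 0 := by
    rw [hg1, map_mul, hφ1, hφ2, Prod.mk_mul_mk, mul_zero, zero_mul]
    rfl
  have hφg2 : φ g2 = 0 := by
    rw [hg2, map_sub, map_add, map_pow, map_pow, map_one, hφ1, hφ2]
    rw [Prod.pow_mk, Prod.pow_mk, hr3]
    simp [Prod.ext_iff]
  have hφ0 : ∀ a ∈ H, φ a = 0 := by
    intro a ha
    rw [hH] at ha
    obtain ⟨u, v, huv⟩ := Ideal.mem_span_pair.1 ha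
    rw [← huv]
    simp only [map_add, map_mul, hφg1, hφg2, mul_zero, add_zero]
  set φbar : Q →ₐ[K] R × R := Ideal.Quotient.liftₐ H φ hφ0 with hφbar
  have hbar : ∀ p, φbar (Ideal.Quotient.mk H p) = φ p := by
    intro p
    rw [hφbar, Ideal.Quotient.liftₐ_apply]
    rfl
  -- the image family
  set v : Fin 6 → R × R :=
    ![(r, 0), (r ^ 2, 0), (1, 0), (0, r), (0, r ^ 2), (0, 1)] with hv
  set w : Fin 6 → Q :=
    ![Ideal.Quotient.mk H (MvPolynomial.X 0),
      Ideal.Quotient.mk H (MvPolynomial.X 0 ^ 2),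
      Ideal.Quotient.mk H (MvPolynomial.X 0 ^ 3),
      Ideal.Quotient.mk H (MvPolynomial.X 1),
      Ideal.Quotient.mk H (MvPolynomial.X 1 ^ 2),
      Ideal.Quotient.mk H (MvPolynomial.X 1 ^ 3)] with hw
  have him : ∀ j, φbar (w j) = v j := by
    intro j
    fin_cases j
    · show φbar (Ideal.Quotient.mk H (MvPolynomial.X 0)) = (r, 0)
      rw [hbar, hφ1]
    · show φbar (Ideal.Quotient.mk H (MvPolynomial.X 0 ^ 2)) = (r ^ 2, 0)
      rw [hbar, map_pow, hφ1, Prod.pow_mk]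
      simp
    · show φbar (Ideal.Quotient.mk H (MvPolynomial.X 0 ^ 3)) = (1, 0)
      rw [hbar, map_pow, hφ1, Prod.pow_mk, hr3]
      simp
    · show φbar (Ideal.Quotient.mk H (MvPolynomial.X 1)) = (0, r)
      rw [hbar, hφ2]
    · show φbar (Ideal.Quotient.mk H (MvPolynomial.X 1 ^ 2)) = (0, r ^ 2)
      rw [hbar, map_pow, hφ2, Prod.pow_mk]
      simp
    · show φbar (Ideal.Quotient.mk H (MvPolynomial.X 1 ^ 3)) = (0, 1)
      rw [hbar, map_pow, hφ2, Prod.pow_mk, hr3]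
      simp
  -- power basis of R
  set pb : PowerBasis K R := AdjoinRoot.powerBasis hfne with hpb
  set B3 : Module.Basis (Fin 3) K R := pb.basis.reindex (finCongr (by rw [hpb, AdjoinRoot.powerBasis_dim]; exact hdeg)) with hB3
  have hB3a : ∀ i : Fin 3, B3 i = r ^ (i : ℕ) := by
    intro i
    rw [hB3, Module.Basis.reindex_apply, pb.basis_eq_pow]
    simp [hpb, hr]
  -- the basis of R × R matching v
  set e : Fin 6 → (Fin 3) ⊕ (Fin 3) :=
    ![Sum.inl 1, Sum.inl 2, Sum.inl 0, Sum.inr 1, Sum.inr 2, Sum.inr 0] with he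
  have hbij : Function.Bijective e := by decide
  set C : Module.Basis (Fin 6) K (R × R) :=
    (B3.prod B3).reindex (Equiv.ofBijective e hbij).symm with hC
  have hCv : ∀ j, C j = v j := by
    intro j
    rw [hC, Module.Basis.reindex_apply, Equiv.symm_symm]
    have pl : ∀ i : Fin 3, (B3.prod B3) (Sum.inl i) = (r ^ (i : ℕ), 0) := by
      intro i
      refine Prod.ext ?_ ?_
      · rw [Module.Basis.prod_apply_inl_fst, hB3a]
      · rw [Module.Basis.prod_apply_inl_snd]
    have pr : ∀ i : Fin 3, (B3.prod B3) (Sum.inr i) = (0, r ^ (i : ℕ)) := by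
      intro i
      refine Prod.ext ?_ ?_
      · rw [Module.Basis.prod_apply_inr_fst]
      · rw [Module.Basis.prod_apply_inr_snd, hB3a]
    fin_cases j
    · show (B3.prod B3) (Sum.inl 1) = (r, 0)
      rw [pl]; norm_num
    · show (B3.prod B3) (Sum.inl 2) = (r ^ 2, 0)
      rw [pl]; norm_num
    · show (B3.prod B3) (Sum.inl 0) = (1, 0)
      rw [pl]; norm_num
    · show (B3.prod B3) (Sum.inr 1) = (0, r)
      rw [pr]; norm_num
    · show (B3.prod B3) (Sum.inr 2) = (0, r ^ 2)
      rw [pr]; norm_num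
    · show (B3.prod B3) (Sum.inr 0) = (0, 1)
      rw [pr]; norm_num
  have hCveq : ⇑C = v := funext hCv
  have hvli : LinearIndependent K v := hCveq ▸ C.linearIndependent
  have hvspan : Submodule.span K (Set.range v) = ⊤ := by rw [← hCveq]; exact C.span_eq
  have h6R : Module.finrank K (R × R) = 6 := by
    rw [Module.finrank_eq_card_basis C, Fintype.card_fin]
  -- surjectivity of φbar
  have hrange : LinearMap.range φbar.toLinearMap = ⊤ := by
    rw [← top_le_iff, ← hvspan]
    refine Submodule.span_le.2 ?_
    rintro z ⟨j, rfl⟩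
    exact ⟨w j, him j⟩
  have hsurj : Function.Surjective φbar := LinearMap.range_eq_top.1 hrange
  -- Q is finite-dimensional of dimension exactly 6
  have hsfin : s.Finite :=
    (((((Set.finite_singleton (y ^ 3)).insert (y ^ 2)).insert y).insert
      (x ^ 3)).insert (x ^ 2)).insert x
  haveI hQfin : Module.Finite K Q := ⟨hspanTop ▸ Submodule.fg_span hsfin⟩
  have hrangew : Set.range w = s := by
    rw [hw, hs]
    rw [Matrix.range_cons, Matrix.range_cons, Matrix.range_cons, Matrix.range_cons,
      Matrix.range_cons, Matrix.range_cons_empty]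
    rw [hx, hy, mk_pow, mk_pow, mk_pow, mk_pow]
    simp only [Set.singleton_union]
  have hle6 : Module.finrank K Q ≤ 6 := by
    have := finrank_le_of_span_eq_top (v := w) (by rw [hrangew, ← hS, hspanTop])
    simpa using this
  have hge6 : 6 ≤ Module.finrank K Q := by
    calc 6 = Module.finrank K (R × R) := h6R.symm
    _ = Module.finrank K (LinearMap.range φbar.toLinearMap) := by
        rw [hrange, finrank_top]
    _ ≤ Module.finrank K Q := LinearMap.finrank_range_le _
  have hQ6 : Module.finrank K Q = 6 := le_antisymm hle6 hge6
  haveI : Module.Finite K R := Module.Finite.of_basis B3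
  have hinj : Function.Injective φbar := by
    have := (LinearMap.injective_iff_surjective_of_finrank_eq_finrank
      (f := φbar.toLinearMap) (by rw [hQ6, h6R])).2 hsurj
    exact this
  refine ⟨⟨AlgEquiv.ofBijective φbar ⟨hinj, hsurj⟩⟩, ?_, ?_, hQ6, ?_, ?_, ?_, ?_⟩
  · exact LinearIndependent.of_comp φbar.toLinearMap
      (by rw [show ⇑φbar.toLinearMap ∘ w = v from funext him]; exact hvli)
  · simp only [mk_pow]
    exact hspanTop
  · rw [← (Ideal.Quotient.mk H).map_mul]
    exact key _ _ ⟨-(MvPolynomial.X 0 ^ 2 * MvPolynomial.X 1 ^ 2), MvPolynomial.X 0 ^ 3, by ring⟩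
  · rw [← (Ideal.Quotient.mk H).map_mul]
    exact key _ _ ⟨-(MvPolynomial.X 0 ^ 2 * MvPolynomial.X 1 ^ 2), MvPolynomial.X 1 ^ 3, by ring⟩
  · rw [← (Ideal.Quotient.mk H).map_mul,
      show (0 : Q) = Ideal.Quotient.mk H 0 from ((Ideal.Quotient.mk H).map_zero).symm]
    exact key _ _ ⟨MvPolynomial.X 0 ^ 2 * MvPolynomial.X 1 ^ 2, 0, by ring⟩
  · rw [← (Ideal.Quotient.mk H).map_add,
      show (1 : Q) = Ideal.Quotient.mk H 1 from ((Ideal.Quotient.mk H).map_one).symm]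
    exact key _ _ ⟨0, 1, by ring⟩
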